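/- arXiv:2410.22703 — 2 statements merged into one kernel-verified Lean document; each statement's English description precedes it below -/
import Mathlib

section
/- Assume conditions (RV) and (UL). Then for all z ≥ U(t₀) and all x ≥ 1, (1 − F(zx)) / (1 − F(z)) ≥ ((x − η)/(1 − η))^{−α}. -/
open MeasureTheory ProbabilityTheory Filter Real

noncomputable section

/-- `F` is a continuous CDF supported on `(0, ∞)`. -/
def IsCDF (F : ℝ → ℝ) : Prop :=
  Monotone F ∧ Continuous F ∧ (∀ x ≤ (0:ℝ), F x = 0) ∧ Tendsto F atTop (nhds 1)

/-- Generalized inverse `F^←(y) = inf {x | F x ≥ y}`. -/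
noncomputable def Finv (F : ℝ → ℝ) (y : ℝ) : ℝ := sInf {x | y ≤ F x}

/-- `U(t) = F^←(1 - 1/t)`. -/
noncomputable def Ufun (F : ℝ → ℝ) (t : ℝ) : ℝ := Finv F (1 - 1/t)

/-- Condition (RV): regular variation of `U` with index `γ = 1/α`. -/
def CondRV (F : ℝ → ℝ) (α : ℝ) : Prop :=
  ∀ x : ℝ, 0 < x →
    Tendsto (fun t => Ufun F (t * x) / Ufun F t) atTop (nhds (x ^ (1/α)))

/-- Condition (UL) with parameters `t₀` and `η`. -/
def CondUL (F : ℝ → ℝ) (α t₀ η : ℝ) : Prop :=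
  0 < t₀ ∧ 0 ≤ η ∧ η < 1 ∧
  ∀ t ≥ t₀, ∀ x ≥ (1:ℝ), (1 - η) * x ^ (1/α) + η ≤ Ufun F (t * x) / Ufun F t

variable {Ω : Type*} [mΩ : MeasurableSpace Ω]

/-- `W 1, W 2, …` are i.i.d. with distribution function `F`. -/
def IIDWith (P : Measure Ω) (F : ℝ → ℝ) (W : ℕ → Ω → ℝ) : Prop :=
  (∀ i, Measurable (W i)) ∧
  iIndepFun W P ∧
  ∀ i (x : ℝ), P {ω | W i ω ≤ x} = ENNReal.ofReal (F x)

/-- `Wo n 1 ≥ Wo n 2 ≥ … ≥ Wo n n` are the decreasing order statistics of `W 1, …, W n`. -/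
def IsOrderStats (W : ℕ → Ω → ℝ) (Wo : ℕ → ℕ → Ω → ℝ) : Prop :=
  (∀ n i, Measurable (Wo n i)) ∧
  (∀ n (ω : Ω), ∀ i ∈ Finset.Icc 1 n, ∀ j ∈ Finset.Icc 1 n, i ≤ j → Wo n j ω ≤ Wo n i ω) ∧
  (∀ n (ω : Ω), (Finset.Icc 1 n).val.map (fun i => Wo n i ω)
      = (Finset.Icc 1 n).val.map (fun i => W i ω))

/-- The σ-algebra generated by the order statistics `(Wo n 1, …, Wo n n)`. -/
def weightSigma (Wo : ℕ → ℕ → Ω → ℝ) (n : ℕ) : MeasurableSpace Ω :=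
  MeasurableSpace.comap (fun ω (i : Fin n) => Wo n ((i : ℕ) + 1) ω) inferInstance

/-- Norros–Reittu degree hypothesis: conditionally on the weights, `D n i` is Poisson
with mean `Wo n i`. -/
def NorrosReittu (P : Measure Ω) (Wo : ℕ → ℕ → Ω → ℝ) (D : ℕ → ℕ → Ω → ℕ) : Prop :=
  (∀ n i, Measurable (D n i)) ∧
  ∀ n, ∀ i ∈ Finset.Icc 1 n, ∀ k : ℕ,
    (P[Set.indicator {ω | D n i ω = k} (fun _ => (1:ℝ)) | weightSigma Wo n]) =ᵐ[P]
      fun ω => Real.exp (-(Wo n i ω)) * (Wo n i ω)^k / (Nat.factorial k)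

/-- Chung–Lu degree hypothesis. -/
def ChungLu (P : Measure Ω) [IsFiniteMeasure P] [StandardBorelSpace Ω]
    (W : ℕ → Ω → ℝ) (Wo : ℕ → ℕ → Ω → ℝ)
    (A : ℕ → ℕ → ℕ → Ω → ℕ) (D : ℕ → ℕ → Ω → ℕ) : Prop :=
  (∀ n i j, Measurable (A n i j)) ∧
  (∀ n i j (ω : Ω), A n i j ω ≤ 1) ∧
  (∀ n i j (ω : Ω), A n j i ω = A n i j ω) ∧
  (∀ n i (ω : Ω), D n i ω = ∑ j ∈ Finset.Icc 1 n, A n i j ω) ∧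
  (∀ n (hle : weightSigma Wo n ≤ mΩ),
    iCondIndepFun (weightSigma Wo n) hle
      (fun (p : {p : ℕ × ℕ // p.1 ∈ Finset.Icc 1 n ∧ p.2 ∈ Finset.Icc 1 n ∧ p.1 ≤ p.2})
        (ω : Ω) => A n p.1.1 p.1.2 ω) P) ∧
  (∀ n, ∀ i ∈ Finset.Icc 1 n, ∀ j ∈ Finset.Icc 1 n, i ≤ j →
    (P[Set.indicator {ω | A n i j ω = 1} (fun _ => (1:ℝ)) | weightSigma Wo n]) =ᵐ[P]
      fun ω => min (Wo n i ω * Wo n j ω / (∑ l ∈ Finset.Icc 1 n, W l ω)) 1)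

/-- Decreasing order statistics for natural-number-valued degree sequences. -/
def IsOrderStatsN (D : ℕ → ℕ → Ω → ℕ) (Do : ℕ → ℕ → Ω → ℕ) : Prop :=
  (∀ n (ω : Ω), ∀ i ∈ Finset.Icc 1 n, ∀ j ∈ Finset.Icc 1 n, i ≤ j → Do n j ω ≤ Do n i ω) ∧
  (∀ n (ω : Ω), (Finset.Icc 1 n).val.map (fun i => Do n i ω)
      = (Finset.Icc 1 n).val.map (fun i => D n i ω))

lemma bddBelow_setF (F : ℝ → ℝ) (hF : IsCDF F) {y : ℝ} (hy0 : 0 < y) :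
    BddBelow {x | y ≤ F x} := by
  refine ⟨0, fun w hw => ?_⟩
  by_contra hlt
  push_neg at hlt
  have h0 := hF.2.2.1 w hlt.le
  simp only [Set.mem_setOf_eq, h0] at hw
  linarith

lemma Finv_eq (F : ℝ → ℝ) (hF : IsCDF F) {y : ℝ} (hy0 : 0 < y) (hy1 : y < 1) :
    F (Finv F y) = y := by
  obtain ⟨hmono, hcont, hzero, htend⟩ := hF
  have hclosed : IsClosed {x | y ≤ F x} := isClosed_le continuous_const hcont
  have hne : Set.Nonempty {x | y ≤ F x} := (htend.eventually (eventually_ge_nhds hy1)).exists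
  have hbdd : BddBelow {x | y ≤ F x} := bddBelow_setF F ⟨hmono, hcont, hzero, htend⟩ hy0
  have hge : y ≤ F (Finv F y) := hclosed.csInf_mem hne hbdd
  have hpos : 0 < Finv F y := by
    by_contra h
    push_neg at h
    rw [hzero _ h] at hge; linarith
  have hmemIcc : y ∈ Set.Icc (F 0) (F (Finv F y)) :=
    ⟨by rw [hzero 0 le_rfl]; exact hy0.le, hge⟩
  obtain ⟨c, _, hc⟩ := intermediate_value_Icc hpos.le hcont.continuousOn hmemIcc
  have hle : Finv F y ≤ c := csInf_le hbdd (by simp [Set.mem_setOf_eq, hc])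
  have h2 := hmono hle
  rw [hc] at h2
  exact le_antisymm h2 hge

lemma Finv_pos (F : ℝ → ℝ) (hF : IsCDF F) {y : ℝ} (hy0 : 0 < y) (hy1 : y < 1) :
    0 < Finv F y := by
  by_contra h
  push_neg at h
  have := Finv_eq F hF hy0 hy1
  rw [hF.2.2.1 _ h] at this
  linarith

lemma Finv_le (F : ℝ → ℝ) (hF : IsCDF F) {y w : ℝ} (hy0 : 0 < y) (h : y ≤ F w) :
    Finv F y ≤ w := csInf_le (bddBelow_setF F hF hy0) h

lemma Finv_of_nonpos (F : ℝ → ℝ) (hF : IsCDF F) {y : ℝ} (hy : y ≤ 0) :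
    Finv F y = 0 := by
  have hset : {x | y ≤ F x} = Set.univ := by
    ext w
    simp only [Set.mem_setOf_eq, Set.mem_univ, iff_true]
    rcases le_or_gt w 0 with hw | hw
    · rw [hF.2.2.1 w hw]; exact hy
    · calc y ≤ 0 := hy
        _ = F 0 := (hF.2.2.1 0 le_rfl).symm
        _ ≤ F w := hF.1 hw.le
  rw [Finv, hset]
  exact Real.sInf_of_not_bddBelow (by simpa using not_bddBelow_univ)


theorem stmt5 (F : ℝ → ℝ) (hF : IsCDF F) (α t₀ η : ℝ) (hα : 0 < α)
    (hRV : CondRV F α) (hUL : CondUL F α t₀ η) :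
    ∀ z ≥ Ufun F t₀, ∀ x ≥ (1 : ℝ),
      ((x - η) / (1 - η)) ^ (-α) ≤ (1 - F (z * x)) / (1 - F z) := by
  obtain ⟨ht₀pos, hη0, hη1, hUL'⟩ := hUL
  have h1η : (0:ℝ) < 1 - η := by linarith
  have hFle1 : ∀ w, F w ≤ 1 := fun w => hF.1.ge_of_tendsto hF.2.2.2 w
  -- U(t₀) ≠ 0
  have hne0 : Ufun F t₀ ≠ 0 := by
    intro h
    have h1 := hUL' t₀ le_rfl 1 le_rfl
    rw [mul_one, h, div_zero, Real.one_rpow] at h1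
    linarith
  -- t₀ > 1
  have ht₀1 : 1 < t₀ := by
    by_contra h
    push_neg at h
    have h1 : (1:ℝ) ≤ 1 / t₀ := by
      rw [le_div_iff₀ ht₀pos]; linarith
    exact hne0 (Finv_of_nonpos F hF (by linarith))
  have ht₀y0 : 0 < 1 - 1/t₀ := by
    have : 1/t₀ < 1 := by rw [div_lt_one ht₀pos]; exact ht₀1
    linarith
  have ht₀y1 : 1 - 1/t₀ < 1 := by
    have : 0 < 1/t₀ := by positivity
    linarith
  have hUt0_pos : 0 < Ufun F t₀ := Finv_pos F hF ht₀y0 ht₀y1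
  intro z hz x hx
  have hzpos : 0 < z := lt_of_lt_of_le hUt0_pos hz
  -- F z < 1
  have hFz1 : F z < 1 := by
    by_contra h
    push_neg at h
    have hFz : F z = 1 := le_antisymm (hFle1 z) h
    set M : ℝ := max 1 ((z / Ufun F t₀ - η) / (1 - η) + 1) with hM
    have hM1 : 1 ≤ M := le_max_left _ _
    have hM0 : 0 < M := lt_of_lt_of_le one_pos hM1
    set x' : ℝ := M ^ α with hx'
    have hx'1 : 1 ≤ x' := Real.one_le_rpow hM1 hα.le
    have hx'g : x' ^ (1/α) = M := by
      rw [one_div]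
      exact Real.rpow_rpow_inv hM0.le hα.ne'
    have hUL2 := hUL' t₀ le_rfl x' hx'1
    rw [hx'g] at hUL2
    have ht₀x'1 : 1 < t₀ * x' := by nlinarith
    have hyy0 : 0 < 1 - 1/(t₀ * x') := by
      have : 1/(t₀ * x') < 1 := by rw [div_lt_one (by linarith)]; exact ht₀x'1
      linarith
    have hle : Ufun F (t₀ * x') ≤ z := by
      apply Finv_le F hF hyy0
      rw [hFz]
      have : 0 < 1/(t₀ * x') := by positivity
      linarith
    have hdiv : Ufun F (t₀ * x') / Ufun F t₀ ≤ z / Ufun F t₀ := by gcongr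
    have hMge : (z / Ufun F t₀ - η) / (1 - η) + 1 ≤ M := le_max_right _ _
    have hMge' : z / Ufun F t₀ - η + (1 - η) ≤ (1 - η) * M := by
      rw [ge_iff_le] at *
      calc z / Ufun F t₀ - η + (1 - η)
          = ((z / Ufun F t₀ - η) / (1 - η) + 1) * (1 - η) := by field_simp
        _ ≤ M * (1 - η) := by gcongr
        _ = (1 - η) * M := by ring
    linarith
  -- F z ≥ 1 - 1/t₀
  have hFU : F (Ufun F t₀) = 1 - 1/t₀ := Finv_eq F hF ht₀y0 ht₀y1
  have hFz_ge : 1 - 1/t₀ ≤ F z := by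
    calc 1 - 1/t₀ = F (Ufun F t₀) := hFU.symm
      _ ≤ F z := hF.1 hz
  have hp : 0 < 1 - F z := by linarith
  set t : ℝ := 1/(1 - F z) with htdef
  have htpos : 0 < t := by positivity
  have ht_ge : t₀ ≤ t := by
    rw [htdef, le_div_iff₀ hp]
    have hmul : t₀ * (1 - F z) ≤ t₀ * (1/t₀) :=
      mul_le_mul_of_nonneg_left (by linarith) ht₀pos.le
    have hcan : t₀ * (1/t₀) = 1 := mul_one_div_cancel ht₀pos.ne'
    linarith
  have ht1 : 1 < t := lt_of_lt_of_le ht₀1 ht_ge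
  have hinvt : 1/t = 1 - F z := by
    rw [htdef, one_div_one_div]
  -- set up y
  have hc1 : (1:ℝ) ≤ (x - η)/(1 - η) := by
    rw [le_div_iff₀ h1η]; linarith
  have hcpos : (0:ℝ) < (x - η)/(1 - η) := lt_of_lt_of_le one_pos hc1
  set y : ℝ := ((x - η)/(1 - η)) ^ α with hydef
  have hy1 : 1 ≤ y := Real.one_le_rpow hc1 hα.le
  have hypos : 0 < y := lt_of_lt_of_le one_pos hy1
  have hyg : y ^ (1/α) = (x - η)/(1 - η) := by
    rw [hydef, one_div]
    exact Real.rpow_rpow_inv hcpos.le hα.ne'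
  have hxy : (1 - η) * y ^ (1/α) + η = x := by
    rw [hyg]; field_simp; ring
  -- key: for all s > t, 1/(s*y) ≤ 1 - F (z*x)
  have key : ∀ s ∈ Set.Ioi t, 1/(s*y) ≤ 1 - F (z*x) := by
    intro s hs
    rw [Set.mem_Ioi] at hs
    have hspos : 0 < s := lt_trans htpos hs
    have hs_t₀ : t₀ ≤ s := le_trans ht_ge hs.le
    have hs1 : 1 < s := lt_trans ht1 hs
    have hFzlt : F z < 1 - 1/s := by
      have h2 : 1/s < 1/t := by
        rw [div_lt_div_iff₀ hspos htpos]
        linarith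
      rw [hinvt] at h2
      linarith
    have hsy0 : 0 < 1 - 1/s := by
      have : 0 ≤ F z := by
        calc (0:ℝ) = F 0 := (hF.2.2.1 0 le_rfl).symm
          _ ≤ F z := hF.1 hzpos.le
      linarith
    have hsy1 : 1 - 1/s < 1 := by
      have : 0 < 1/s := by positivity
      linarith
    have hUs_gt : z < Ufun F s := by
      by_contra h
      push_neg at h
      have h2 : F (Ufun F s) ≤ F z := hF.1 h
      have h3 : F (Ufun F s) = 1 - 1/s := Finv_eq F hF hsy0 hsy1
      linarith
    have hUs_pos : 0 < Ufun F s := lt_trans hzpos hUs_gt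
    have hUL3 := hUL' s hs_t₀ y hy1
    rw [hxy] at hUL3
    have hprod : x * Ufun F s ≤ Ufun F (s * y) := by
      rw [← le_div_iff₀ hUs_pos]
      exact hUL3
    have hzx_le : z * x ≤ Ufun F (s * y) := by
      calc z * x ≤ Ufun F s * x := by
            apply mul_le_mul_of_nonneg_right hUs_gt.le (by linarith)
        _ = x * Ufun F s := by ring
        _ ≤ Ufun F (s * y) := hprod
    have hsy_gt1 : 1 < s * y := by nlinarith
    have hsyy0 : 0 < 1 - 1/(s*y) := by
      have : 1/(s*y) < 1 := by rw [div_lt_one (by linarith)]; exact hsy_gt1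
      linarith
    have hsyy1 : 1 - 1/(s*y) < 1 := by
      have : 0 < 1/(s*y) := by positivity
      linarith
    have hFzx : F (z * x) ≤ 1 - 1/(s*y) := by
      calc F (z * x) ≤ F (Ufun F (s * y)) := hF.1 hzx_le
        _ = 1 - 1/(s*y) := Finv_eq F hF hsyy0 hsyy1
    linarith
  -- take the limit s → t⁺
  have hty : t * y ≠ 0 := by positivity
  have htends : Tendsto (fun s : ℝ => 1/(s*y)) (nhdsWithin t (Set.Ioi t)) (nhds (1/(t*y))) := by
    apply Tendsto.mono_left _ nhdsWithin_le_nhds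
    exact (tendsto_const_nhds.div ((continuous_id.mul continuous_const).tendsto t) hty)
  have hev : ∀ᶠ s in nhdsWithin t (Set.Ioi t), 1/(s*y) ≤ 1 - F (z*x) :=
    eventually_nhdsWithin_of_forall key
  have hfinal : 1/(t*y) ≤ 1 - F (z*x) := le_of_tendsto htends hev
  -- convert
  have hrw : ((x - η)/(1 - η)) ^ (-α) = y⁻¹ := by
    rw [Real.rpow_neg hcpos.le, hydef]
  rw [hrw, le_div_iff₀ hp]
  have h1ty : 1/(t*y) = y⁻¹ * (1 - F z) := by
    rw [one_div, mul_inv, ← one_div t, hinvt]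
    ring
  linarith [hfinal, h1ty ▸ hfinal]

end
end

section
/- Assume condition (RV) with tail index α > 2. Then P( W_{(1)}(n)² ≤ L(n) ) → 1 as n → ∞. -/
open MeasureTheory ProbabilityTheory Filter Real

noncomputable section

variable {Ω : Type*} [mΩ : MeasurableSpace Ω]

lemma F_nonneg {F : ℝ → ℝ} (hF : IsCDF F) (x : ℝ) : 0 ≤ F x := by
  rcases le_or_gt x 0 with h | h
  · rw [hF.2.2.1 x h]
  · rw [← hF.2.2.1 0 le_rfl]; exact hF.1 h.le

lemma Finv_set_props {F : ℝ → ℝ} (hF : IsCDF F) {y : ℝ} (hy0 : 0 < y) (hy1 : y < 1) :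
    {x | y ≤ F x}.Nonempty ∧ BddBelow {x | y ≤ F x} ∧ IsClosed {x | y ≤ F x} := by
  refine ⟨?_, ⟨0, fun x hx => ?_⟩, isClosed_Ici.preimage hF.2.1⟩
  · exact (hF.2.2.2.eventually (eventually_ge_nhds hy1)).exists
  · by_contra h
    push_neg at h
    have := hF.2.2.1 x h.le
    simp only [Set.mem_setOf_eq, this] at hx
    linarith

lemma F_Finv {F : ℝ → ℝ} (hF : IsCDF F) {y : ℝ} (hy0 : 0 < y) (hy1 : y < 1) :
    y ≤ F (Finv F y) := by
  obtain ⟨hne, hbdd, hcl⟩ := Finv_set_props hF hy0 hy1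
  exact hcl.csInf_mem hne hbdd

lemma Finv_mono {F : ℝ → ℝ} (hF : IsCDF F) {y y' : ℝ} (hy0 : 0 < y) (hy'1 : y' < 1)
    (h : y ≤ y') : Finv F y ≤ Finv F y' := by
  obtain ⟨_, hbdd, _⟩ := Finv_set_props hF hy0 (lt_of_le_of_lt h hy'1)
  obtain ⟨hne, _, _⟩ := Finv_set_props hF (lt_of_lt_of_le hy0 h) hy'1
  exact csInf_le_csInf hbdd hne (fun x hx => le_trans h hx)


lemma exists_x0 {F : ℝ → ℝ} (hF : IsCDF F) : ∃ x0 : ℝ, 0 < x0 ∧ F x0 < 1/2 := by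
  have h0 : F 0 = 0 := hF.2.2.1 0 le_rfl
  have : ∀ᶠ x in nhds (0:ℝ), F x < 1/2 := by
    have := hF.2.1.continuousAt (x := 0)
    exact this.eventually_lt continuousAt_const (by rw [h0]; norm_num)
  obtain ⟨ε, hε, h⟩ := Metric.eventually_nhds_iff.mp this
  refine ⟨ε/2, by linarith, h ?_⟩
  rw [Real.dist_eq, sub_zero, abs_of_pos (by linarith : (0:ℝ) < ε/2)]
  linarith

lemma one_sub_inv_mem {t : ℝ} (ht : 2 ≤ t) : (1:ℝ)/2 ≤ 1 - 1/t ∧ 1 - 1/t < 1 := by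
  have h0 : 0 < t := by linarith
  constructor
  · have : 1/t ≤ 1/2 := by apply div_le_div_of_nonneg_left <;> linarith
    linarith
  · have : 0 < 1/t := by positivity
    linarith

lemma Ufun_mono {F : ℝ → ℝ} (hF : IsCDF F) {s t : ℝ} (hs : 2 ≤ s) (h : s ≤ t) :
    Ufun F s ≤ Ufun F t := by
  obtain ⟨hs1, _⟩ := one_sub_inv_mem hs
  obtain ⟨_, ht2⟩ := one_sub_inv_mem (hs.trans h)
  refine Finv_mono hF (by linarith) ht2 ?_
  have h0 : 0 < s := by linarith
  have h0' : 0 < t := by linarith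
  have : 1/t ≤ 1/s := by apply div_le_div_of_nonneg_left <;> linarith
  linarith

lemma Ufun_pos {F : ℝ → ℝ} (hF : IsCDF F) {x0 : ℝ} (hx0 : 0 < x0) (hx0' : F x0 < 1/2)
    {t : ℝ} (ht : 2 ≤ t) : x0 < Ufun F t := by
  obtain ⟨h1, h2⟩ := one_sub_inv_mem ht
  have hFU : 1 - 1/t ≤ F (Ufun F t) := F_Finv hF (by linarith) h2
  by_contra h
  push_neg at h
  have := hF.1 h
  linarith

lemma Ufun_growth {F : ℝ → ℝ} (hF : IsCDF F) {α : ℝ} (hα : 0 < α) (hRV : CondRV F α)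
    {β : ℝ} (hβ : 1/α < β) :
    ∃ C > 0, ∀ᶠ t in atTop, Ufun F t ≤ C * t ^ β := by
  obtain ⟨x0, hx0, hx0'⟩ := exists_x0 hF
  have hβ0 : 0 < β := lt_trans (by positivity) hβ
  have h2β : (2:ℝ) ^ (1/α) < 2 ^ β := Real.rpow_lt_rpow_left_iff (by norm_num) |>.mpr hβ
  have h2β1 : (1:ℝ) ≤ 2 ^ β := Real.one_le_rpow (by norm_num) hβ0.le
  have hev : ∀ᶠ t in atTop, Ufun F (t * 2) / Ufun F t < 2 ^ β :=
    (hRV 2 (by norm_num)).eventually (eventually_lt_nhds h2β)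
  obtain ⟨t₁, ht₁⟩ := (hev.and (eventually_ge_atTop (2:ℝ))).exists_forall_of_atTop
  have ht₁2 : 2 ≤ t₁ := (ht₁ t₁ le_rfl).2
  have ht₁0 : 0 < t₁ := by linarith
  -- doubling bound
  have hdouble : ∀ t, t₁ ≤ t → Ufun F (t * 2) ≤ 2 ^ β * Ufun F t := by
    intro t ht
    have hUpos : 0 < Ufun F t := lt_trans hx0 (Ufun_pos hF hx0 hx0' ((ht₁ t ht).2))
    have := (ht₁ t ht).1
    calc Ufun F (t * 2) = (Ufun F (t * 2) / Ufun F t) * Ufun F t := by field_simp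
    _ ≤ 2 ^ β * Ufun F t := by
        apply mul_le_mul_of_nonneg_right this.le hUpos.le
  -- induction claim
  have hind : ∀ k : ℕ, ∀ t, t₁ ≤ t → t ≤ 2^k * t₁ → Ufun F t ≤ (2^β)^k * Ufun F t₁ := by
    intro k
    induction k with
    | zero => intro t ht hle; simp only [pow_zero, one_mul] at hle ⊢
              exact Ufun_mono hF (by linarith) hle
    | succ k ih =>
      intro t ht hle
      rcases le_or_gt t (2^k * t₁) with h | h
      · refine (ih t ht h).trans ?_
        exact mul_le_mul_of_nonneg_right (pow_le_pow_right₀ h2β1 (by omega))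
          (lt_trans hx0 (Ufun_pos hF hx0 hx0' ht₁2)).le
      · rcases le_or_gt t₁ (t/2) with h2 | h2
        · have : Ufun F t ≤ 2 ^ β * Ufun F (t/2) := by
            have := hdouble (t/2) h2
            rwa [div_mul_cancel₀ t (by norm_num : (2:ℝ) ≠ 0)] at this
          refine this.trans ?_
          have hih := ih (t/2) h2 (by rw [pow_succ] at hle; linarith)
          calc (2:ℝ)^β * Ufun F (t/2) ≤ 2^β * ((2^β)^k * Ufun F t₁) :=
              mul_le_mul_of_nonneg_left hih (by positivity)
          _ = (2^β)^(k+1) * Ufun F t₁ := by ring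
        · -- t < 2 t₁
          have h3 : t ≤ t₁ * 2 := by linarith
          have : Ufun F t ≤ 2 ^ β * Ufun F t₁ :=
            (Ufun_mono hF (by linarith) h3).trans (hdouble t₁ le_rfl)
          refine this.trans ?_
          apply mul_le_mul_of_nonneg_right ?_ (by linarith [Ufun_pos hF hx0 hx0' ht₁2])
          calc (2:ℝ)^β = (2^β)^1 := (pow_one _).symm
          _ ≤ (2^β)^(k+1) := pow_le_pow_right₀ h2β1 (by omega)
  -- conclusion
  have hU1pos : 0 < Ufun F t₁ := lt_trans hx0 (Ufun_pos hF hx0 hx0' ht₁2)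
  refine ⟨(2/t₁)^β * Ufun F t₁, by positivity, ?_⟩
  filter_upwards [eventually_ge_atTop (2*t₁)] with t ht
  have ht1 : t₁ ≤ t := by linarith
  have htpos : 0 < t := by linarith
  have hex : ∃ k : ℕ, t ≤ 2^k * t₁ := by
    obtain ⟨n, hn⟩ := pow_unbounded_of_one_lt (t/t₁) (one_lt_two (α := ℝ))
    refine ⟨n, ?_⟩
    rw [div_lt_iff₀ ht₁0] at hn
    linarith
  set k := Nat.find hex with hkdef
  have hk : t ≤ 2^k * t₁ := Nat.find_spec hex
  have hk1 : 1 ≤ k := by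
    by_contra hcon
    have hk0 : k = 0 := by omega
    have := hk
    rw [hk0] at this
    simp only [pow_zero, one_mul] at this
    linarith
  have hkm := Nat.find_min hex (m := k - 1) (by omega)
  push_neg at hkm
  have h2k : ((2:ℝ))^k ≤ 2*t/t₁ := by
    have : (2:ℝ)^k = 2 * 2^(k-1) := by
      rw [← pow_succ']
      congr 1
      omega
    rw [this, le_div_iff₀ ht₁0]
    nlinarith
  have hmain := hind k t ht1 hk
  have heq : ((2:ℝ)^β)^k = ((2:ℝ)^k)^β := by
    rw [← Real.rpow_natCast ((2:ℝ)^β) k, ← Real.rpow_natCast (2:ℝ) k,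
      ← Real.rpow_mul (by norm_num : (0:ℝ) ≤ 2), ← Real.rpow_mul (by norm_num : (0:ℝ) ≤ 2),
      mul_comm]
  have hle2 : ((2:ℝ)^k)^β ≤ (2*t/t₁)^β :=
    Real.rpow_le_rpow (by positivity) h2k hβ0.le
  have hsplit : (2*t/t₁)^β = (2/t₁)^β * t^β := by
    rw [show 2*t/t₁ = (2/t₁)*t by ring, Real.mul_rpow (by positivity) htpos.le]
  calc Ufun F t ≤ ((2:ℝ)^β)^k * Ufun F t₁ := hmain
  _ ≤ (2*t/t₁)^β * Ufun F t₁ := by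
      rw [heq]
      exact mul_le_mul_of_nonneg_right hle2 hU1pos.le
  _ = (2/t₁)^β * Ufun F t₁ * t^β := by rw [hsplit]; ring

theorem stmt10 (F : ℝ → ℝ) (hF : IsCDF F) (α : ℝ) (hα : 2 < α) (hRV : CondRV F α)
    (P : Measure Ω) [IsProbabilityMeasure P] (W : ℕ → Ω → ℝ) (Wo : ℕ → ℕ → Ω → ℝ)
    (hW : IIDWith P F W) (hWo : IsOrderStats W Wo) :
    Tendsto (fun n : ℕ => P {ω | (Wo n 1 ω) ^ 2 ≤ ∑ i ∈ Finset.Icc 1 n, W i ω})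
      atTop (nhds 1) := by
  classical
  obtain ⟨hWmeas, hWindep, hWcdf⟩ := hW
  have hα0 : (0:ℝ) < α := by linarith
  -- choose m with F m = 1/2
  obtain ⟨m, hm0, hFm⟩ : ∃ m : ℝ, 0 < m ∧ F m = 1/2 := by
    obtain ⟨b, hb⟩ := (hF.2.2.2.eventually (eventually_ge_nhds (by norm_num : (3/4:ℝ) < 1))).exists
    have hb0 : 0 ≤ b := by
      by_contra h
      push_neg at h
      rw [hF.2.2.1 b h.le] at hb
      linarith
    have := intermediate_value_Icc hb0 (hF.2.1.continuousOn)
    have hmem : (1/2:ℝ) ∈ Set.Icc (F 0) (F b) := by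
      constructor
      · rw [hF.2.2.1 0 le_rfl]; norm_num
      · linarith
    obtain ⟨m, hm, hFm⟩ := this hmem
    refine ⟨m, ?_, hFm⟩
    by_contra h
    push_neg at h
    rw [hF.2.2.1 m h] at hFm
    norm_num at hFm
  -- exponents
  set β : ℝ := (1/α + 1/2)/2 with hβdef
  have hαhalf : 1/α < 1/2 := by
    rw [div_lt_div_iff₀ hα0 (by norm_num)]
    linarith
  have hβα : 1/α < β := by rw [hβdef]; linarith
  have hβ0 : 0 < β := lt_trans (by positivity) hβα
  have hβhalf : β < 1/2 := by rw [hβdef]; linarith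
  set θ : ℝ := (β + 1/2)/(2*β) with hθdef
  have hθ1 : 1 < θ := by
    rw [hθdef, lt_div_iff₀ (by positivity)]
    linarith
  have hθβ : θ * β < 1/2 := by
    have h : θ * β = (β + 1/2)/2 := by
      rw [hθdef]; field_simp
    rw [h]; linarith
  have hθ0 : 0 < θ := by linarith
  -- threshold b n
  set bn : ℕ → ℝ := fun n => Real.sqrt (m * n / 4) with hbndef
  -- (E1) eventually Ufun F (n^θ) ≤ bn n
  have hE1 : ∀ᶠ n : ℕ in atTop, Ufun F ((n:ℝ)^θ) ≤ bn n := by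
    obtain ⟨C, hC0, hC⟩ := Ufun_growth hF hα0 hRV hβα
    have hnθ : Tendsto (fun n : ℕ => ((n:ℝ))^θ) atTop atTop :=
      (tendsto_rpow_atTop hθ0).comp tendsto_natCast_atTop_atTop
    have h1 := hnθ.eventually hC
    have h2 : ∀ᶠ n : ℕ in atTop, C / Real.sqrt (m/4) ≤ ((n:ℝ))^(1/2 - θ*β) := by
      have : Tendsto (fun n : ℕ => ((n:ℝ))^(1/2 - θ*β)) atTop atTop :=
        (tendsto_rpow_atTop (by linarith)).comp tendsto_natCast_atTop_atTop
      exact this.eventually_ge_atTop _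
    filter_upwards [h1, h2, eventually_ge_atTop 1] with n hn1 hn2 hn3
    have hnpos : (0:ℝ) < n := by exact_mod_cast hn3
    have hbn : bn n = Real.sqrt (m/4) * (n:ℝ)^(1/2:ℝ) := by
      simp only [hbndef]
      rw [show m * (n:ℝ) / 4 = (m/4) * n by ring, Real.sqrt_mul (by positivity)]
      congr 1
      exact Real.sqrt_eq_rpow _
    have hcb : ((n:ℝ)^θ)^β = (n:ℝ)^(θ*β) := (Real.rpow_mul hnpos.le θ β).symm
    refine hn1.trans ?_
    have hsq : (0:ℝ) < Real.sqrt (m/4) := Real.sqrt_pos.mpr (by positivity)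
    rw [hcb, hbn, show (1/2:ℝ) = (1/2 - θ*β) + θ*β by ring, Real.rpow_add hnpos]
    have h3 : C ≤ Real.sqrt (m/4) * (n:ℝ)^(1/2-θ*β) := by
      rw [mul_comm]
      exact (div_le_iff₀ hsq).mp hn2
    calc C * (n:ℝ)^(θ*β) ≤ (Real.sqrt (m/4) * (n:ℝ)^(1/2 - θ*β)) * (n:ℝ)^(θ*β) :=
          mul_le_mul_of_nonneg_right h3 (by positivity)
      _ = Real.sqrt (m/4) * ((n:ℝ)^(1/2-θ*β) * (n:ℝ)^(θ*β)) := by ring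
  -- (E2) tail bound
  have hE2 : ∀ᶠ n : ℕ in atTop, ∀ i : ℕ,
      P {ω | bn n < W i ω} ≤ ENNReal.ofReal ((n:ℝ)^(-θ)) := by
    have hnθ : Tendsto (fun n : ℕ => ((n:ℝ))^θ) atTop atTop :=
      (tendsto_rpow_atTop hθ0).comp tendsto_natCast_atTop_atTop
    filter_upwards [hE1, hnθ.eventually_ge_atTop 2, eventually_ge_atTop 1] with n hn1 hn2 hn3
    intro i
    have hnpos : (0:ℝ) < n := by exact_mod_cast hn3
    have hFbn : 1 - (n:ℝ)^(-θ) ≤ F (bn n) := by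
      have h1 : 1 - 1/((n:ℝ)^θ) ≤ F (Ufun F ((n:ℝ)^θ)) :=
        F_Finv hF (by
          have : 1/((n:ℝ)^θ) ≤ 1/2 := by
            apply div_le_div_of_nonneg_left <;> linarith
          linarith) (by
          have : 0 < 1/((n:ℝ)^θ) := by positivity
          linarith)
      have h2 : F (Ufun F ((n:ℝ)^θ)) ≤ F (bn n) := hF.1 hn1
      rw [show ((n:ℝ))^(-θ) = 1/((n:ℝ)^θ) by rw [Real.rpow_neg hnpos.le]; ring]
      linarith
    have hcompl : {ω | bn n < W i ω} = {ω | W i ω ≤ bn n}ᶜ := by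
      ext ω; simp [not_le]
    have hmeas : MeasurableSet {ω | W i ω ≤ bn n} :=
      measurableSet_le (hWmeas i) measurable_const
    rw [hcompl, prob_compl_eq_one_sub hmeas, hWcdf i (bn n)]
    have hle1 : ENNReal.ofReal (1 - (n:ℝ)^(-θ)) ≤ ENNReal.ofReal (F (bn n)) :=
      ENNReal.ofReal_le_ofReal hFbn
    calc 1 - ENNReal.ofReal (F (bn n)) ≤ 1 - ENNReal.ofReal (1 - (n:ℝ)^(-θ)) :=
          tsub_le_tsub_left hle1 1
      _ = ENNReal.ofReal ((n:ℝ)^(-θ)) := by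
          rw [← ENNReal.ofReal_one, ← ENNReal.ofReal_sub _ (by
            have h1 : (n:ℝ)^(-θ) ≤ 1 := by
              rw [Real.rpow_neg hnpos.le]
              apply inv_le_one_of_one_le₀
              apply Real.one_le_rpow (by exact_mod_cast hn3) hθ0.le
            linarith)]
          norm_num
  -- indicator variables
  set g : ℝ → ℝ := Set.indicator (Set.Ioi m) (fun _ => (1:ℝ)) with hgdef
  have hgmeas : Measurable g := measurable_const.indicator measurableSet_Ioi
  set X : ℕ → Ω → ℝ := fun i => g ∘ W i with hXdef
  have hXmeas : ∀ i, Measurable (X i) := fun i => hgmeas.comp (hWmeas i)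
  have hXval : ∀ i ω, X i ω = if m < W i ω then 1 else 0 := by
    intro i ω
    simp [hXdef, hgdef, Set.indicator_apply, Set.mem_Ioi]
  have hXmem : ∀ i, MemLp (X i) 2 P := by
    intro i
    apply MemLp.of_bound (hXmeas i).aestronglyMeasurable 1
    refine ae_of_all _ fun ω => ?_
    rw [hXval i ω]
    split <;> simp
  have hXint : ∀ i, Integrable (X i) P := fun i => (hXmem i).integrable one_le_two
  have hPhalf : ∀ i : ℕ, P {ω | m < W i ω} = ENNReal.ofReal (1/2) := by
    intro i
    have hcompl : {ω | m < W i ω} = {ω | W i ω ≤ m}ᶜ := by ext ω; simp [not_le]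
    rw [hcompl, prob_compl_eq_one_sub (measurableSet_le (hWmeas i) measurable_const),
      hWcdf i m, hFm, ← ENNReal.ofReal_one, ← ENNReal.ofReal_sub _ (by norm_num)]
    norm_num
  have hEX : ∀ i : ℕ, P[X i] = 1/2 := by
    intro i
    have : X i = Set.indicator ((W i)⁻¹' (Set.Ioi m)) (fun _ => (1:ℝ)) := by
      funext ω
      rw [hXval i ω]
      simp [Set.indicator_apply, Set.mem_Ioi]
    rw [this, integral_indicator_const (1:ℝ) (measurableSet_Ioi.preimage (hWmeas i))]
    have : (W i)⁻¹' (Set.Ioi m) = {ω | m < W i ω} := rfl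
    rw [this, measureReal_def, hPhalf i, ENNReal.toReal_ofReal (by norm_num)]
    norm_num
  have hXvar : ∀ i : ℕ, variance (X i) P ≤ 1/2 := by
    intro i
    have hsq : (X i)^2 = X i := by
      funext ω
      simp only [Pi.pow_apply]
      rw [hXval i ω]
      split <;> norm_num
    calc variance (X i) P ≤ P[(X i)^2] := variance_le_expectation_sq (hXmeas i).aestronglyMeasurable
      _ = 1/2 := by rw [hsq, hEX i]
  -- Chebyshev bound
  have hcheb : ∀ n : ℕ, 1 ≤ n →
      P {ω | (∑ i ∈ Finset.Icc 1 n, X i) ω < (n:ℝ)/4} ≤ ENNReal.ofReal (8/(n:ℝ)) := by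
    intro n hn
    have hnpos : (0:ℝ) < n := by exact_mod_cast hn
    have hSmem : MemLp (∑ i ∈ Finset.Icc 1 n, X i) 2 P :=
      memLp_finset_sum' _ (fun i _ => hXmem i)
    have hES : P[∑ i ∈ Finset.Icc 1 n, X i] = (n:ℝ)/2 := by
      simp only [Finset.sum_apply]
      rw [integral_finset_sum _ (fun i _ => hXint i)]
      rw [Finset.sum_congr rfl (fun i _ => hEX i), Finset.sum_const, Nat.card_Icc]
      simp
      ring
    have hVS : variance (∑ i ∈ Finset.Icc 1 n, X i) P ≤ (n:ℝ)/2 := by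
      rw [IndepFun.variance_sum (fun i _ => hXmem i) ?_]
      · calc ∑ i ∈ Finset.Icc 1 n, variance (X i) P ≤ ∑ i ∈ Finset.Icc 1 n, (1/2:ℝ) :=
              Finset.sum_le_sum (fun i _ => hXvar i)
          _ = (n:ℝ)/2 := by rw [Finset.sum_const, Nat.card_Icc]; simp; ring
      · intro i _ j _ hij
        exact (hWindep.indepFun hij).comp hgmeas hgmeas
    have hchev := meas_ge_le_variance_div_sq (μ := P) hSmem (show (0:ℝ) < (n:ℝ)/4 by positivity)
    refine le_trans (measure_mono ?_) (hchev.trans ?_)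
    · intro ω hω
      simp only [Set.mem_setOf_eq] at hω ⊢
      rw [hES]
      rw [le_abs]
      right
      simp only [neg_sub]
      linarith
    · apply ENNReal.ofReal_le_ofReal
      rw [div_le_div_iff₀ (by positivity) hnpos]
      nlinarith [hVS]
  -- null set
  have hnull : ∀ n : ℕ, P (⋃ i ∈ Finset.Icc 1 n, {ω | W i ω ≤ 0}) = 0 := by
    intro n
    refine le_antisymm (le_trans (measure_biUnion_finset_le _ _) ?_) zero_le'
    have : ∀ i ∈ Finset.Icc 1 n, P {ω | W i ω ≤ 0} = 0 := by
      intro i _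
      rw [hWcdf i 0, hF.2.2.1 0 le_rfl]
      simp
    rw [Finset.sum_congr rfl this]
    simp
  -- inclusion of complement
  have hincl : ∀ n : ℕ, 1 ≤ n →
      {ω | (Wo n 1 ω) ^ 2 ≤ ∑ i ∈ Finset.Icc 1 n, W i ω}ᶜ ⊆
        {ω | (∑ i ∈ Finset.Icc 1 n, X i) ω < (n:ℝ)/4} ∪
        ((⋃ i ∈ Finset.Icc 1 n, {ω | bn n < W i ω}) ∪
         (⋃ i ∈ Finset.Icc 1 n, {ω | W i ω ≤ 0})) := by
    intro n hn ω hω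
    by_contra hcon
    simp only [Set.mem_union, not_or, Set.mem_setOf_eq, Set.mem_iUnion, not_exists, not_lt,
      not_le, exists_prop] at hcon
    obtain ⟨h1, h2, h3⟩ := hcon
    have hb : ∀ i ∈ Finset.Icc 1 n, W i ω ≤ bn n :=
      fun i hi => le_of_not_gt fun hc => h2 i ⟨hi, hc⟩
    have hpos : ∀ i ∈ Finset.Icc 1 n, 0 < W i ω :=
      fun i hi => not_le.mp fun hc => h3 i ⟨hi, hc⟩
    -- lower bound on sum
    have hsum : m * ((n:ℝ)/4) ≤ ∑ i ∈ Finset.Icc 1 n, W i ω := by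
      calc m * ((n:ℝ)/4) ≤ m * (∑ i ∈ Finset.Icc 1 n, X i) ω :=
            mul_le_mul_of_nonneg_left h1 hm0.le
        _ = ∑ i ∈ Finset.Icc 1 n, m * X i ω := by
            rw [Finset.sum_apply, Finset.mul_sum]
        _ ≤ ∑ i ∈ Finset.Icc 1 n, W i ω := by
            apply Finset.sum_le_sum
            intro i hi
            rw [hXval i ω]
            split
            · next h => simpa using h.le
            · simpa using (hpos i hi).le
    -- Wo n 1 is one of the W i
    obtain ⟨j, hj, hjeq⟩ : ∃ j ∈ Finset.Icc 1 n, Wo n 1 ω = W j ω := by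
      have hmem : Wo n 1 ω ∈ Multiset.map (fun i => Wo n i ω) (Finset.Icc 1 n).val := by
        refine Multiset.mem_map.mpr ⟨1, ?_, rfl⟩
        rw [Finset.mem_val, Finset.mem_Icc]
        omega
      rw [hWo.2.2 n ω] at hmem
      obtain ⟨j, hj, hjeq⟩ := Multiset.mem_map.mp hmem
      exact ⟨j, Finset.mem_val.mp hj, hjeq.symm⟩
    have hWo1 : 0 < Wo n 1 ω := hjeq ▸ hpos j hj
    have hWob : Wo n 1 ω ≤ bn n := hjeq ▸ hb j hj
    have hsq : (Wo n 1 ω)^2 ≤ m * (n:ℝ)/4 := by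
      calc (Wo n 1 ω)^2 ≤ (bn n)^2 := pow_le_pow_left₀ hWo1.le hWob 2
        _ = m * (n:ℝ)/4 := Real.sq_sqrt (by positivity)
    exact hω (by
      simp only [Set.mem_setOf_eq]
      calc (Wo n 1 ω)^2 ≤ m * (n:ℝ)/4 := hsq
        _ = m * ((n:ℝ)/4) := by ring
        _ ≤ _ := hsum)
  -- bound on complement probability
  have hcompl : ∀ᶠ n : ℕ in atTop,
      P ({ω | (Wo n 1 ω) ^ 2 ≤ ∑ i ∈ Finset.Icc 1 n, W i ω}ᶜ)
        ≤ ENNReal.ofReal (8/(n:ℝ)) + ENNReal.ofReal ((n:ℝ)^(1-θ)) := by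
    filter_upwards [hE2, eventually_ge_atTop 1] with n hn2 hn1
    have hnpos : (0:ℝ) < n := by exact_mod_cast hn1
    have hbad2 : P (⋃ i ∈ Finset.Icc 1 n, {ω | bn n < W i ω})
        ≤ ENNReal.ofReal ((n:ℝ)^(1-θ)) := by
      refine le_trans (measure_biUnion_finset_le _ _) ?_
      calc ∑ i ∈ Finset.Icc 1 n, P {ω | bn n < W i ω}
          ≤ ∑ _i ∈ Finset.Icc 1 n, ENNReal.ofReal ((n:ℝ)^(-θ)) :=
            Finset.sum_le_sum (fun i _ => hn2 i)
        _ = (n : ENNReal) * ENNReal.ofReal ((n:ℝ)^(-θ)) := by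
            rw [Finset.sum_const, Nat.card_Icc]
            simp [nsmul_eq_mul]
        _ = ENNReal.ofReal ((n:ℝ)^(1-θ)) := by
            rw [← ENNReal.ofReal_natCast n, ← ENNReal.ofReal_mul (by positivity)]
            congr 1
            rw [show (1:ℝ) - θ = 1 + (-θ) by ring, Real.rpow_add hnpos, Real.rpow_one]
    calc P ({ω | (Wo n 1 ω) ^ 2 ≤ ∑ i ∈ Finset.Icc 1 n, W i ω}ᶜ)
        ≤ P ({ω | (∑ i ∈ Finset.Icc 1 n, X i) ω < (n:ℝ)/4} ∪
            ((⋃ i ∈ Finset.Icc 1 n, {ω | bn n < W i ω}) ∪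
             (⋃ i ∈ Finset.Icc 1 n, {ω | W i ω ≤ 0}))) :=
          measure_mono (hincl n hn1)
      _ ≤ P {ω | (∑ i ∈ Finset.Icc 1 n, X i) ω < (n:ℝ)/4} +
          (P (⋃ i ∈ Finset.Icc 1 n, {ω | bn n < W i ω}) +
           P (⋃ i ∈ Finset.Icc 1 n, {ω | W i ω ≤ 0})) :=
          le_trans (measure_union_le _ _) (by
            exact add_le_add le_rfl (measure_union_le _ _))
      _ ≤ ENNReal.ofReal (8/(n:ℝ)) + (ENNReal.ofReal ((n:ℝ)^(1-θ)) + 0) := by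
          refine add_le_add (hcheb n hn1) (add_le_add hbad2 (le_of_eq (hnull n)))
      _ = ENNReal.ofReal (8/(n:ℝ)) + ENNReal.ofReal ((n:ℝ)^(1-θ)) := by rw [add_zero]
  -- the bound tends to 0
  have htend0 : Tendsto (fun n : ℕ => ENNReal.ofReal (8/(n:ℝ)) + ENNReal.ofReal ((n:ℝ)^(1-θ)))
      atTop (nhds 0) := by
    have h1 : Tendsto (fun n : ℕ => ENNReal.ofReal (8/(n:ℝ))) atTop (nhds 0) := by
      have := ENNReal.tendsto_ofReal (tendsto_const_div_atTop_nhds_zero_nat 8)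
      simpa using this
    have h2 : Tendsto (fun n : ℕ => ENNReal.ofReal ((n:ℝ)^(1-θ))) atTop (nhds 0) := by
      have hr : Tendsto (fun x : ℝ => x^(1-θ)) atTop (nhds 0) := by
        have := tendsto_rpow_neg_atTop (y := θ - 1) (by linarith : (0:ℝ) < θ - 1)
        convert this using 2
        ring
      have := ENNReal.tendsto_ofReal (hr.comp tendsto_natCast_atTop_atTop)
      simpa using this
    have := h1.add h2
    simpa using this
  have hPcompl : Tendsto (fun n : ℕ =>
      P ({ω | (Wo n 1 ω) ^ 2 ≤ ∑ i ∈ Finset.Icc 1 n, W i ω}ᶜ)) atTop (nhds 0) := by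
    refine tendsto_of_tendsto_of_tendsto_of_le_of_le' tendsto_const_nhds htend0
      (Eventually.of_forall fun n => zero_le') hcompl
  -- conclude
  have hmeasE : ∀ n : ℕ, MeasurableSet {ω | (Wo n 1 ω) ^ 2 ≤ ∑ i ∈ Finset.Icc 1 n, W i ω} := by
    intro n
    exact measurableSet_le ((hWo.1 n 1).pow_const 2)
      (Finset.measurable_sum _ (fun i _ => hWmeas i))
  have hrw : ∀ n : ℕ, P {ω | (Wo n 1 ω) ^ 2 ≤ ∑ i ∈ Finset.Icc 1 n, W i ω}
      = 1 - P ({ω | (Wo n 1 ω) ^ 2 ≤ ∑ i ∈ Finset.Icc 1 n, W i ω}ᶜ) := by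
    intro n
    have := prob_add_prob_compl (μ := P) (hmeasE n)
    exact ENNReal.eq_sub_of_add_eq (measure_ne_top P _) this
  simp_rw [hrw]
  have := ENNReal.Tendsto.sub (tendsto_const_nhds (x := (1:ENNReal)) (f := atTop)) hPcompl
    (Or.inl ENNReal.one_ne_top)
  simpa using this

end
end
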